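/- For all d ≥ 2 and k ≥ 1, there exist a k-flexible sunflower U = (U_1,…,U_{dk}) of convex open sets in ℝ^d and points p_1,…,p_{dk} with p_i ∈ U_i, such that the convex hull of {p_1,…,p_{dk}} contains no point of the center ⋂_{i=1}^{dk} U_i. -/

import Mathlib

/-- `U` is a `k`-flexible sunflower of convex open sets: the sets have a common point and
every point of the space lies either in all of the `U i` or in at most `k` of them. -/
def IsKFlexibleSunflower {n d : ℕ} (k : ℕ) (U : Fin n → Set (EuclideanSpace ℝ (Fin d))) : Prop :=
  (∀ i, Convex ℝ (U i)) ∧ (∀ i, IsOpen (U i)) ∧ (⋂ i, U i).Nonempty ∧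
  ∀ x : EuclideanSpace ℝ (Fin d), {i | x ∈ U i} = Set.univ ∨ {i | x ∈ U i}.ncard ≤ k

/-- For `d ≥ 2`, `k ≥ 1`, there is a `k`-flexible sunflower in `ℝ^d` with `dk` petals and a
choice of one point per petal whose convex hull misses the center. -/
lemma convex_comb_lt_aux {x y a b c : ℝ} (hx : x < c) (hy : y < c)
    (ha : 0 ≤ a) (hb : 0 ≤ b) (hab : a + b = 1) : a * x + b * y < c := by
  rcases ha.eq_or_lt with h | h
  · rw [← h] at hab ⊢
    simp at hab ⊢
    rw [hab]; linarith
  · have h1 : a * x < a * c := by exact (mul_lt_mul_iff_right₀ h).mpr hx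
    have h2 : b * y ≤ b * c := mul_le_mul_of_nonneg_left hy.le hb
    have h3 : a * c + b * c = c := by rw [← add_mul, hab, one_mul]
    linarith


theorem flexible_sunflower_fails {d k : ℕ} (hd : 2 ≤ d) (hk : 1 ≤ k) :
    ∃ U : Fin (d*k) → Set (EuclideanSpace ℝ (Fin d)),
      IsKFlexibleSunflower k U ∧
      ∃ p : Fin (d*k) → EuclideanSpace ℝ (Fin d),
        (∀ i, p i ∈ U i) ∧ convexHull ℝ (Set.range p) ∩ (⋂ i, U i) = ∅ := by
  have hk0 : 0 < k := hk
  have hd0 : 0 < d := by omega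
  have hne : Nonempty (Fin d) := ⟨⟨0, hd0⟩⟩
  have hnt : Nontrivial (Fin d) := Fin.nontrivial_iff_two_le.mpr hd
  set E := EuclideanSpace ℝ (Fin d) with hE
  let V : Fin d → Set E := fun j => {x | ∀ i, -1 < x i ∧ (i ≠ j → x i < 1)}
  have hg : ∀ i : Fin (d*k), (i : ℕ) / k < d := by
    intro i
    rw [Nat.div_lt_iff_lt_mul hk0]
    have := i.2; omega
  let g : Fin (d*k) → Fin d := fun i => ⟨(i : ℕ) / k, hg i⟩
  have cube_sub : ∀ x : E, (∀ i, -1 < x i ∧ x i < 1) → ∀ j, x ∈ V j := by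
    intro x hx j i
    exact ⟨(hx i).1, fun _ => (hx i).2⟩
  have two_mem : ∀ (x : E) (j j' : Fin d), j ≠ j' → x ∈ V j → x ∈ V j' →
      ∀ i, -1 < x i ∧ x i < 1 := by
    intro x j j' hjj hxj hxj' i
    refine ⟨(hxj i).1, ?_⟩
    by_cases hij : i = j
    · exact (hxj' i).2 (hij ▸ hjj)
    · exact (hxj i).2 hij
  refine ⟨fun i => V (g i), ⟨?_, ?_, ?_, ?_⟩, ?_⟩
  · -- convex
    intro i x hx y hy a b ha hb hab l
    have hx' := hx l; have hy' := hy l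
    have hcoord : (a • x + b • y) l = a * x l + b * y l := rfl
    constructor
    · rw [hcoord]
      have := convex_comb_lt_aux (x := -(x l)) (y := -(y l)) (c := 1)
        (by linarith [hx'.1]) (by linarith [hy'.1]) ha hb hab
      nlinarith
    · intro hne'
      rw [hcoord]
      exact convex_comb_lt_aux (hx'.2 hne') (hy'.2 hne') ha hb hab
  · -- open
    intro i
    show IsOpen (V (g i))
    have hVeq : V (g i) = ⋂ l, ({x : E | -1 < x l} ∩ {x : E | l ≠ g i → x l < 1}) := by
      ext x; simp [V, Set.mem_iInter]
    rw [hVeq]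
    apply isOpen_iInter_of_finite
    intro l
    apply IsOpen.inter
    · exact isOpen_lt continuous_const (EuclideanSpace.proj l).continuous
    · by_cases hl : l = g i
      · have : {x : E | l ≠ g i → x l < 1} = Set.univ := by
          ext x; simp [hl]
        rw [this]; exact isOpen_univ
      · have : {x : E | l ≠ g i → x l < 1} = {x : E | x l < 1} := by
          ext x; simp [hl]
        rw [this]; exact isOpen_lt (EuclideanSpace.proj l).continuous continuous_const
  · -- nonempty center
    refine ⟨0, ?_⟩
    simp only [Set.mem_iInter]
    intro i
    apply cube_sub
    intro l
    norm_num
  · -- flexibility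
    intro x
    by_cases hall : ∃ j j', j ≠ j' ∧ x ∈ V j ∧ x ∈ V j'
    · left
      obtain ⟨j, j', hjj, hxj, hxj'⟩ := hall
      have hcx := cube_sub x (two_mem x j j' hjj hxj hxj')
      ext i; simp [hcx (g i)]
    · right
      push_neg at hall
      by_cases hex : ∃ j, x ∈ V j
      · obtain ⟨j0, hj0⟩ := hex
        have hsub : {i : Fin (d*k) | x ∈ V (g i)} ⊆ {i : Fin (d*k) | g i = j0} := by
          intro i hi
          by_contra hne'
          exact hall (g i) j0 hne' hi hj0
        have hfin : ({i : Fin (d*k) | g i = j0}).Finite := Set.toFinite _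
        have hcard : ({i : Fin (d*k) | g i = j0}).ncard ≤ k := by
          have hinj : Set.InjOn (fun i : Fin (d*k) => (⟨(i:ℕ) % k, Nat.mod_lt _ hk0⟩ : Fin k))
              {i : Fin (d*k) | g i = j0} := by
            intro a ha b hb hab
            have ha' : (a:ℕ) / k = j0 := congrArg Fin.val ha
            have hb' : (b:ℕ) / k = j0 := congrArg Fin.val hb
            have hab' : (a:ℕ) % k = (b:ℕ) % k := congrArg Fin.val hab
            have : (a:ℕ) = (b:ℕ) := by
              conv_lhs => rw [← Nat.div_add_mod (a:ℕ) k]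
              conv_rhs => rw [← Nat.div_add_mod (b:ℕ) k]
              rw [ha', hb', hab']
            exact Fin.ext this
          calc ({i : Fin (d*k) | g i = j0}).ncard
              ≤ (Set.univ : Set (Fin k)).ncard :=
                Set.ncard_le_ncard_of_injOn _ (fun a _ => Set.mem_univ _) hinj (Set.toFinite _)
            _ = k := by simp [Set.ncard_univ]
        exact le_trans (Set.ncard_le_ncard hsub hfin) hcard
      · push_neg at hex
        have hemp : {i : Fin (d*k) | x ∈ V (g i)} = ∅ := by
          ext i; simp [hex (g i)]
        simp only [Set.mem_setOf_eq] at hemp ⊢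
        rw [hemp]
        simp
  · -- points
    refine ⟨fun i => EuclideanSpace.single (g i) (d : ℝ), ?_, ?_⟩
    · intro i l
      show -1 < EuclideanSpace.single (g i) (d:ℝ) l ∧
        (l ≠ g i → EuclideanSpace.single (g i) (d:ℝ) l < 1)
      rw [EuclideanSpace.single_apply]
      by_cases hl : l = g i
      · rw [if_pos hl]
        constructor
        · have : (1:ℝ) ≤ d := by exact_mod_cast hd0
          linarith
        · intro h; exact absurd hl h
      · rw [if_neg hl]
        norm_num
    · -- hull misses center
      have hlin : IsLinearMap ℝ (fun x : E => ∑ l, x l) := by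
        constructor
        · intro a b
          rw [← Finset.sum_add_distrib]
          rfl
        · intro c a
          rw [Finset.smul_sum]
          rfl
      have hhyp : Convex ℝ {x : E | ∑ l, x l = (d:ℝ)} := convex_hyperplane hlin d
      have hrange : Set.range (fun i => EuclideanSpace.single (g i) (d : ℝ)) ⊆
          {x : E | ∑ l, x l = (d:ℝ)} := by
        rintro _ ⟨i, rfl⟩
        simp only [Set.mem_setOf_eq]
        show ∑ l, (EuclideanSpace.single (g i) (d:ℝ) : E) l = (d:ℝ)
        rw [Finset.sum_eq_single (g i)]
        · rw [EuclideanSpace.single_apply]; simp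
        · intro b _ hb; rw [EuclideanSpace.single_apply]; simp [hb]
        · simp
      have hhull := convexHull_min hrange hhyp
      ext x
      simp only [Set.mem_inter_iff, Set.mem_empty_iff_false, iff_false, not_and]
      intro hxh hxc
      have hsum : ∑ l, x l = (d:ℝ) := hhull hxh
      rw [Set.mem_iInter] at hxc
      have hlt : ∀ l : Fin d, x l < 1 := by
        intro l
        obtain ⟨j, hjl⟩ : ∃ j : Fin d, j ≠ l := exists_ne l
        have hjk : (j : ℕ) * k < d * k := (Nat.mul_lt_mul_right hk0).mpr j.2
        have hgi : g ⟨(j:ℕ)*k, hjk⟩ = j := by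
          apply Fin.ext
          simp [g, Nat.mul_div_cancel _ hk0]
        have hxv := hxc ⟨(j:ℕ)*k, hjk⟩
        rw [hgi] at hxv
        exact (hxv l).2 (fun h => hjl h.symm)
      have hslt : ∑ l, x l < ∑ _l : Fin d, (1:ℝ) := by
        apply Finset.sum_lt_sum_of_nonempty
        · exact Finset.univ_nonempty
        · intro l _; exact hlt l
      rw [hsum] at hslt
      simp at hslt
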